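/- Let α ∈ (0,1), c > 0, k > 0 and p > 0 be constants. Then G* := ((r−μ) n k / (α(n−1))) · c^{1−α} / p is the unique G > 0 satisfying ∫₀^{G} y^{−m−1} ( α c^{α−1} y p − r k ) dy = 0, and moreover α c^{α−1} x p − r k > 0 for every x ≥ G*. -/

import Mathlib

lemma key_int (e A B G : ℝ) (he : 0 < e) (hG : 0 ≤ G) :
    ∫ y in (0:ℝ)..G, y ^ (e - 1) * (A * y - B)
      = A * G ^ (e + 1) / (e + 1) - B * G ^ e / e := by
  have hcongr : ∀ y ∈ Set.uIcc (0:ℝ) G,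
      y ^ (e - 1) * (A * y - B) = A * y ^ e - B * y ^ (e - 1) := by
    intro y hy
    rw [Set.uIcc_of_le hG] at hy
    have hy0 : 0 ≤ y := hy.1
    have h : y ^ e = y ^ (e - 1) * y := by
      rw [show e = (e - 1) + 1 by ring, Real.rpow_add' hy0 (by linarith), Real.rpow_one]
      ring_nf
    rw [h]; ring
  rw [intervalIntegral.integral_congr hcongr]
  have i1 : IntervalIntegrable (fun y : ℝ => y ^ e) MeasureTheory.volume 0 G :=
    intervalIntegral.intervalIntegrable_rpow' (by linarith)
  have i2 : IntervalIntegrable (fun y : ℝ => y ^ (e - 1)) MeasureTheory.volume 0 G :=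
    intervalIntegral.intervalIntegrable_rpow' (by linarith)
  rw [intervalIntegral.integral_sub (i1.const_mul A) (i2.const_mul B),
    intervalIntegral.integral_const_mul, intervalIntegral.integral_const_mul,
    integral_rpow (Or.inl (by linarith)), integral_rpow (Or.inl (by linarith))]
  rw [Real.zero_rpow (by linarith : e + 1 ≠ 0), Real.zero_rpow (by linarith : e - 1 + 1 ≠ 0)]
  rw [show e - 1 + 1 = e by ring]
  ring



/-- With r > μ and m < 0 < n the roots of ½σ²ℓ² + (μ−½σ²)ℓ − r = 0, and
constants α ∈ (0,1), c, k, p > 0, the point G* = ((r−μ)nk/(α(n−1))) c^{1−α}/p is the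
unique G > 0 with ∫₀^G y^{−m−1}(αc^{α−1}yp − rk) dy = 0, and
αc^{α−1}xp − rk > 0 for every x ≥ G*. -/
theorem statement11 (σ μ r : ℝ) (hσ : 0 < σ) (hr : 0 < r) (hrμ : μ < r)
    (m n : ℝ)
    (hm : m = (-(μ - σ ^ 2 / 2) - Real.sqrt ((μ - σ ^ 2 / 2) ^ 2 + 2 * σ ^ 2 * r)) / σ ^ 2)
    (hn : n = (-(μ - σ ^ 2 / 2) + Real.sqrt ((μ - σ ^ 2 / 2) ^ 2 + 2 * σ ^ 2 * r)) / σ ^ 2)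
    (α c k p : ℝ) (hα : α ∈ Set.Ioo (0:ℝ) 1) (hc : 0 < c) (hk : 0 < k) (hp : 0 < p)
    (Gstar : ℝ)
    (hGstar : Gstar = (r - μ) * n * k / (α * (n - 1)) * c ^ (1 - α) / p) :
    0 < Gstar ∧
    (∫ y in (0:ℝ)..Gstar, y ^ (-m - 1) * (α * c ^ (α - 1) * y * p - r * k)) = 0 ∧
    (∀ G > (0:ℝ),
      (∫ y in (0:ℝ)..G, y ^ (-m - 1) * (α * c ^ (α - 1) * y * p - r * k)) = 0 →
      G = Gstar) ∧
    ∀ x, Gstar ≤ x → 0 < α * c ^ (α - 1) * x * p - r * k := by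
  obtain ⟨hα0, hα1⟩ := hα
  have hσ2 : (0:ℝ) < σ ^ 2 := by positivity
  set b := μ - σ ^ 2 / 2 with hb
  set s := Real.sqrt (b ^ 2 + 2 * σ ^ 2 * r) with hsdef
  have hD : (0:ℝ) < b ^ 2 + 2 * σ ^ 2 * r := by positivity
  have hs2 : s ^ 2 = b ^ 2 + 2 * σ ^ 2 * r := Real.sq_sqrt hD.le
  have hs0 : 0 < s := Real.sqrt_pos.mpr hD
  have hm' : m * σ ^ 2 = -b - s := by rw [hm]; field_simp
  have hn' : n * σ ^ 2 = -b + s := by rw [hn]; field_simp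
  -- m < 0
  have hsb : -b < s := by nlinarith [mul_pos hσ2 hr]
  have hmneg : m < 0 := by nlinarith [hm', hσ2, hsb]
  -- n > 1
  have h3 : (s - (b + σ ^ 2)) * (s + (b + σ ^ 2)) = 2 * σ ^ 2 * (r - μ) := by
    linear_combination hs2 - 2 * σ ^ 2 * hb
  have hsb2 : b + σ ^ 2 < s := by
    nlinarith [h3, hs0, mul_pos hσ2 (show (0:ℝ) < r - μ by linarith)]
  have hn1 : 1 < n := by nlinarith [hn', hσ2, hsb2]
  have he : 0 < -m := by linarith
  -- Vieta
  have hsum : (m + n) * σ ^ 2 = -2 * b := by linear_combination hm' + hn'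
  have hprod : m * n * σ ^ 2 = -2 * r := by
    apply mul_right_cancel₀ hσ2.ne'
    have h4 : (m * σ ^ 2) * (n * σ ^ 2) = (-b - s) * (-b + s) := by rw [hm', hn']
    linear_combination h4 - hs2
  have hkey : r * (1 - m) * (n - 1) = (r - μ) * n * (-m) := by
    apply mul_right_cancel₀ hσ2.ne'
    linear_combination r * hsum - μ * hprod
  clear_value b s
  clear hm hn hsdef hb hs2 hs0 hm' hn' hsum hprod h3 hsb hsb2 hD
  -- setup
  set t := c ^ (α - 1) with htdef
  have ht : 0 < t := Real.rpow_pos_of_pos hc _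
  have hct : c ^ (1 - α) = t⁻¹ := by
    rw [htdef, ← Real.rpow_neg hc.le]; norm_num
  set A := α * t * p with hA
  have hApos : 0 < A := by positivity
  clear_value t A
  rw [hct] at hGstar
  have hn1' : n - 1 ≠ 0 := by intro h; rw [sub_eq_zero] at h; linarith
  have hm1 : -m + 1 ≠ 0 := by intro h; linarith
  have hGval : Gstar * A * (-m) = r * k * (1 - m) := by
    rw [hGstar, hA]
    field_simp
    linear_combination (-1) * hkey
  have hGpos : 0 < Gstar := by
    rw [hGstar]
    have h1 : 0 < r - μ := by linarith
    have h2 : 0 < n - 1 := by linarith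
    have h5 : 0 < n := by linarith
    positivity
  refine ⟨hGpos, ?_, ?_, ?_⟩
  · rw [show (fun y => y ^ (-m - 1) * (α * t * y * p - r * k))
        = (fun y => y ^ (-m - 1) * (A * y - r * k)) by funext y; rw [hA]; ring]
    rw [key_int (-m) A (r * k) Gstar he hGpos.le]
    rw [show Gstar ^ (-m + 1) = Gstar ^ (-m) * Gstar by
      rw [Real.rpow_add hGpos, Real.rpow_one]]
    rw [div_sub_div _ _ hm1 he.ne', div_eq_zero_iff]
    left
    linear_combination (Gstar ^ (-m)) * hGval
  · intro G hG hint
    rw [show (fun y => y ^ (-m - 1) * (α * t * y * p - r * k))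
        = (fun y => y ^ (-m - 1) * (A * y - r * k)) by funext y; rw [hA]; ring] at hint
    rw [key_int (-m) A (r * k) G he hG.le] at hint
    rw [show G ^ (-m + 1) = G ^ (-m) * G by
      rw [Real.rpow_add hG, Real.rpow_one]] at hint
    rw [div_sub_div _ _ hm1 he.ne', div_eq_zero_iff] at hint
    have hG0 : (0:ℝ) < G ^ (-m) := Real.rpow_pos_of_pos hG _
    rcases hint with hint | hint
    · have h2 : G ^ (-m) * (G * A * (-m)) = G ^ (-m) * (r * k * (1 - m)) := by
        linear_combination hint
      have h1 : G * A * (-m) = r * k * (1 - m) := mul_left_cancel₀ hG0.ne' h2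
      have h6 : G * (A * (-m)) = Gstar * (A * (-m)) := by linear_combination h1 - hGval
      exact mul_right_cancel₀ (mul_pos hApos he).ne' h6
    · exact absurd hint (mul_pos (by linarith : (0:ℝ) < -m + 1) he).ne'
  · intro x hx
    have hxA : Gstar * (A * (-m)) ≤ x * (A * (-m)) :=
      mul_le_mul_of_nonneg_right hx (mul_pos hApos he).le
    have h7 : r * k * (1 - m) ≤ x * A * (-m) := by
      calc r * k * (1 - m) = Gstar * A * (-m) := hGval.symm
        _ = Gstar * (A * (-m)) := by ring
        _ ≤ x * (A * (-m)) := hxA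
        _ = x * A * (-m) := by ring
    have h8 : 0 < (A * x - r * k) * (-m) := by
      have hrk : 0 < r * k := mul_pos hr hk
      nlinarith [h7, hrk]
    have hgoal : 0 < A * x - r * k := by
      rcases mul_pos_iff.mp h8 with ⟨h9, _⟩ | ⟨_, h10⟩
      · exact h9
      · linarith
    linarith [hgoal, (by rw [hA]; ring : A * x - r * k = α * t * x * p - r * k)]
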